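/- The set R₁ of colours of edges of E₁ satisfies |R₁| ≥ αn. -/

import Mathlib

/-
A multigraph on vertex type `V` is given by an edge type `E` with two endpoint
maps `fst snd : E → V` (no loops: `fst e ≠ snd e`); parallel edges are allowed
since distinct elements of `E` may have the same endpoints.  A colouring
`col : E → C` by a set `C` of `n` colours is proper if any two distinct edges
sharing a vertex get distinct colours.
-/

attribute [local instance] Classical.propDecidable
set_option linter.unusedSectionVars false
set_option linter.unusedVariables false
set_option linter.unnecessarySimpa false
set_option maxHeartbeats 1000000

/-- The set of endpoints of an edge. -/
def endpts {V E : Type*} [DecidableEq V] (fst snd : E → V) (e : E) : Finset V :=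
  {fst e, snd e}

/-- A set of edges is a rainbow matching: pairwise vertex-disjoint edges with
pairwise distinct colours. -/
def IsRainbowMatching {V E C : Type*} [DecidableEq V] (fst snd : E → V) (col : E → C)
    (S : Finset E) : Prop :=
  (∀ e ∈ S, ∀ f ∈ S, e ≠ f → endpts fst snd e ∩ endpts fst snd f = ∅) ∧
  (∀ e ∈ S, ∀ f ∈ S, col e = col f → e = f)

/-- `V(M)`: the set of vertices covered by a set of edges `M`. -/
def mVerts {V E : Type*} [DecidableEq V] (fst snd : E → V) (M : Finset E) : Finset V :=
  M.biUnion (endpts fst snd)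

/-- The set of colours used by a set of edges `M`. -/
def mCols {E C : Type*} [DecidableEq C] (col : E → C) (M : Finset E) : Finset C :=
  M.image col

/-- `C₀`: the set of colours not used by `M`. -/
def C0 {E C : Type*} [Fintype C] [DecidableEq C] (col : E → C) (M : Finset E) : Finset C :=
  Finset.univ \ mCols col M

/-- An edge is external if one endpoint is in `V(M)` and the other is outside `V(M)`. -/
def IsExternal {V E : Type*} [DecidableEq V] (fst snd : E → V) (M : Finset E) (e : E) : Prop :=
  (fst e ∈ mVerts fst snd M ∧ snd e ∉ mVerts fst snd M) ∨
  (fst e ∉ mVerts fst snd M ∧ snd e ∈ mVerts fst snd M)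

/-- The number of external `C₀`-edges incident to a vertex `v`. -/
noncomputable def extC0deg {V E C : Type*} [DecidableEq V] [Fintype E] [Fintype C]
    [DecidableEq C] (fst snd : E → V) (col : E → C) (M : Finset E) (v : V) : ℕ :=
  (Finset.univ.filter fun f : E =>
    IsExternal fst snd M f ∧ col f ∈ C0 col M ∧ v ∈ endpts fst snd f).card

/-- `E₀`: the edges of `M` having an endpoint (a possible tail) incident to at least
`α|C₀|` external `C₀`-edges. -/
noncomputable def E0 {V E C : Type*} [DecidableEq V] [Fintype E] [Fintype C] [DecidableEq C]
    (fst snd : E → V) (col : E → C) (M : Finset E) (α : ℝ) : Finset E :=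
  M.filter fun e => ∃ v ∈ endpts fst snd e,
    α * ((C0 col M).card : ℝ) ≤ (extC0deg fst snd col M v : ℝ)

/-- `F`: the set of flexible colours, i.e. the colours of the edges of `E₀`. -/
noncomputable def Fcols {V E C : Type*} [DecidableEq V] [Fintype E] [Fintype C] [DecidableEq C]
    (fst snd : E → V) (col : E → C) (M : Finset E) (α : ℝ) : Finset C :=
  mCols col (E0 fst snd col M α)

/-- A good external edge: an external edge `e` whose colour lies in `F` such that the
edge `m_{c(e)}` of `M` of the same colour is incident to at least `α|C₀|/2` external
`C₀`-edges sharing no endpoint with `e`. -/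
noncomputable def IsGood {V E C : Type*} [DecidableEq V] [Fintype E] [Fintype C] [DecidableEq C]
    (fst snd : E → V) (col : E → C) (M : Finset E) (α : ℝ) (e : E) : Prop :=
  IsExternal fst snd M e ∧ col e ∈ Fcols fst snd col M α ∧
  ∃ g ∈ M, col g = col e ∧
    α * ((C0 col M).card : ℝ) / 2 ≤
      ((Finset.univ.filter fun f : E => IsExternal fst snd M f ∧ col f ∈ C0 col M ∧
        (endpts fst snd f ∩ endpts fst snd g).Nonempty ∧
        endpts fst snd f ∩ endpts fst snd e = ∅).card : ℝ)

/-- The number of good external `F`-edges incident to a vertex `v`. -/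
noncomputable def goodDeg {V E C : Type*} [DecidableEq V] [Fintype E] [Fintype C] [DecidableEq C]
    (fst snd : E → V) (col : E → C) (M : Finset E) (α : ℝ) (v : V) : ℕ :=
  (Finset.univ.filter fun f : E => IsGood fst snd col M α f ∧ v ∈ endpts fst snd f).card

/-- `E₁`: the edges of `M` having an endpoint (a possible tail) incident to at least
`α|F|` good external `F`-edges. -/
noncomputable def E1 {V E C : Type*} [DecidableEq V] [Fintype E] [Fintype C] [DecidableEq C]
    (fst snd : E → V) (col : E → C) (M : Finset E) (α : ℝ) : Finset E :=
  M.filter fun e => ∃ v ∈ endpts fst snd e,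
    α * ((Fcols fst snd col M α).card : ℝ) ≤ (goodDeg fst snd col M α v : ℝ)

/-- Given a choice `tl` of tail for each edge, the corresponding head. -/
def hdOf {V E : Type*} [DecidableEq V] (fst snd : E → V) (tl : E → V) (e : E) : V :=
  if tl e = fst e then snd e else fst e

/-- The endpoint of the edge `f` other than `v` (for `v` an endpoint of `f`). -/
def other {V E : Type*} [DecidableEq V] (fst snd : E → V) (v : V) (f : E) : V :=
  if fst f = v then snd f else fst f

/-- The condition for a vertex `v` to be a possible tail at step `i > 1` of the
reachability algorithm: for some `0 < j < i`, the number of `R_j`-edges `v u` with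
`u ∈ V₀ ∪ V₁ ∪ ⋯ ∪ V_{i-1}` is at least `α|R_j|`. -/
noncomputable def reachCond {V E C : Type*} [DecidableEq V] [Fintype V] [Fintype E] [Fintype C]
    [DecidableEq C] (fst snd : E → V) (col : E → C) (M : Finset E)
    (Vs : ℕ → Finset V) (Rs : ℕ → Finset C) (α : ℝ) (i : ℕ) (v : V) : Prop :=
  ∃ j ∈ Finset.Ioo 0 i, α * ((Rs j).card : ℝ) ≤
    ((Finset.univ.filter fun f : E => v ∈ endpts fst snd f ∧ col f ∈ Rs j ∧
      other fst snd v f ∈ (Finset.univ \ mVerts fst snd M) ∪ (Finset.Ioo 0 i).biUnion Vs).card : ℝ)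

/-- The set `T(S)` of twins (matching partners under `M`) of the vertices of `S`. -/
def twins {V E : Type*} [DecidableEq V] (fst snd : E → V) (M : Finset E) (S : Finset V) :
    Finset V :=
  M.biUnion fun g => (if fst g ∈ S then {snd g} else ∅) ∪ (if snd g ∈ S then {fst g} else ∅)


section Aux

variable {V E C : Type*} [Fintype V] [DecidableEq V] [Fintype E] [DecidableEq E]
    [Fintype C] [DecidableEq C]

lemma mem_endpts {fst snd : E → V} {e : E} {x : V} :
    x ∈ endpts fst snd e ↔ x = fst e ∨ x = snd e := by
  simp [endpts]

lemma card_endpts_le (fst snd : E → V) (e : E) : (endpts fst snd e).card ≤ 2 := by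
  classical
  exact (Finset.card_insert_le _ _).trans (by simp)

lemma card_endpts (fst snd : E → V) (hloop : ∀ e : E, fst e ≠ snd e) (e : E) :
    (endpts fst snd e).card = 2 := by
  classical
  rw [endpts, Finset.card_insert_of_notMem (by simp [hloop e]), Finset.card_singleton]

lemma endpts_subset_mVerts {fst snd : E → V} {M : Finset E} {g : E} (hg : g ∈ M) :
    endpts fst snd g ⊆ mVerts fst snd M := fun x hx => Finset.mem_biUnion.2 ⟨g, hg, hx⟩

lemma mVerts_card_le (fst snd : E → V) (M : Finset E) :
    (mVerts fst snd M).card ≤ 2 * M.card := by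
  classical
  calc (mVerts fst snd M).card ≤ ∑ e ∈ M, (endpts fst snd e).card := Finset.card_biUnion_le
  _ ≤ ∑ _e ∈ M, 2 := Finset.sum_le_sum fun e _ => card_endpts_le fst snd e
  _ = 2 * M.card := by rw [Finset.sum_const, smul_eq_mul, mul_comm]

lemma disj_same_col {fst snd : E → V} {col : E → C}
    (hproper : ∀ e f : E, e ≠ f → (endpts fst snd e ∩ endpts fst snd f).Nonempty →
      col e ≠ col f)
    {e f : E} (hne : e ≠ f) (hcol : col e = col f) :
    endpts fst snd e ∩ endpts fst snd f = ∅ := by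
  by_contra h
  exact hproper e f hne (Finset.nonempty_iff_ne_empty.2 h) hcol

lemma external_unique {fst snd : E → V} {M : Finset E} {f : E}
    (hext : IsExternal fst snd M f) {x y : V}
    (hx : x ∈ endpts fst snd f) (hx' : x ∈ mVerts fst snd M)
    (hy : y ∈ endpts fst snd f) (hy' : y ∈ mVerts fst snd M) : x = y := by
  rcases hext with ⟨h1, h2⟩ | ⟨h1, h2⟩ <;>
    rcases mem_endpts.1 hx with rfl | rfl <;>
    rcases mem_endpts.1 hy with rfl | rfl <;>
    first
      | rfl
      | (exact absurd hx' h2) | (exact absurd hy' h2)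
      | (exact absurd hx' h1) | (exact absurd hy' h1)

lemma bothin_card_le (fst snd : E → V) (col : E → C)
    (hloop : ∀ e : E, fst e ≠ snd e)
    (hproper : ∀ e f : E, e ≠ f → (endpts fst snd e ∩ endpts fst snd f).Nonempty →
      col e ≠ col f)
    (M : Finset E) (c : C) :
    (Finset.univ.filter fun e : E =>
      col e = c ∧ endpts fst snd e ⊆ mVerts fst snd M).card ≤ M.card := by
  classical
  set S := Finset.univ.filter fun e : E =>
      col e = c ∧ endpts fst snd e ⊆ mVerts fst snd M with hS
  have hdisj : ∀ e ∈ S, ∀ f ∈ S, e ≠ f →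
      Disjoint (endpts fst snd e) (endpts fst snd f) := by
    intro e he f hf hne
    rw [Finset.disjoint_iff_inter_eq_empty]
    simp only [hS, Finset.mem_filter, Finset.mem_univ, true_and] at he hf
    exact disj_same_col hproper hne (he.1.trans hf.1.symm)
  have h1 : (S.biUnion (endpts fst snd)).card = 2 * S.card := by
    rw [Finset.card_biUnion hdisj]
    calc (∑ e ∈ S, (endpts fst snd e).card) = ∑ _e ∈ S, 2 :=
      Finset.sum_congr rfl fun e _ => card_endpts fst snd hloop e
    _ = 2 * S.card := by rw [Finset.sum_const, smul_eq_mul, mul_comm]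
  have h2 : S.biUnion (endpts fst snd) ⊆ mVerts fst snd M := by
    intro x hx
    obtain ⟨e, he, hxe⟩ := Finset.mem_biUnion.1 hx
    simp only [hS, Finset.mem_filter, Finset.mem_univ, true_and] at he
    exact he.2 hxe
  have := (Finset.card_le_card h2).trans (mVerts_card_le fst snd M)
  omega

lemma card_le_of_colors {fst snd : E → V} (col : E → C)
    (hproper : ∀ e f : E, e ≠ f → (endpts fst snd e ∩ endpts fst snd f).Nonempty →
      col e ≠ col f)
    (v : V) (S : Finset E) (D : Finset C)
    (h : ∀ e ∈ S, col e ∈ D ∧ v ∈ endpts fst snd e) : S.card ≤ D.card := by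
  classical
  apply Finset.card_le_card_of_injOn col (fun e he => (h e he).1)
  intro e he f hf hcol
  by_contra hne
  exact hproper e f hne ⟨v, Finset.mem_inter.2 ⟨(h e (by exact he)).2, (h f (by exact hf)).2⟩⟩ hcol

lemma card_le_two_of_meet {fst snd : E → V} {col : E → C}
    (hproper : ∀ e f : E, e ≠ f → (endpts fst snd e ∩ endpts fst snd f).Nonempty →
      col e ≠ col f)
    (f : E) (c : C) (S : Finset E)
    (h : ∀ e ∈ S, col e = c ∧ (endpts fst snd e ∩ endpts fst snd f).Nonempty) :
    S.card ≤ 2 := by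
  classical
  have hle : S.card ≤ (endpts fst snd f).card := by
    apply Finset.card_le_card_of_injOn
      (fun e => if fst e ∈ endpts fst snd f then fst e else snd e)
    · intro e he
      by_cases hc : fst e ∈ endpts fst snd f
      · simpa [hc]
      · simp only [hc, if_false]
        obtain ⟨x, hx⟩ := (h e he).2
        rw [Finset.mem_inter] at hx
        rcases mem_endpts.1 hx.1 with h1 | h1
        · exact absurd (h1 ▸ hx.2) hc
        · exact h1 ▸ hx.2
    · intro e he g hg hfg
      by_contra hne
      have hdisj := disj_same_col hproper hne ((h e he).1.trans (h g hg).1.symm)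
      have h1 : (if fst e ∈ endpts fst snd f then fst e else snd e) ∈ endpts fst snd e := by
        split <;> simp [mem_endpts]
      have h2 : (if fst g ∈ endpts fst snd f then fst g else snd g) ∈ endpts fst snd g := by
        split <;> simp [mem_endpts]
      have : (if fst e ∈ endpts fst snd f then fst e else snd e) ∈
          endpts fst snd e ∩ endpts fst snd g := by
        have hfg' : (if fst e ∈ endpts fst snd f then fst e else snd e) =
            (if fst g ∈ endpts fst snd f then fst g else snd g) := hfg
        exact Finset.mem_inter.2 ⟨h1, by rw [hfg']; exact h2⟩
      rw [hdisj] at this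
      simp at this
  exact hle.trans (card_endpts_le fst snd f)

lemma extend_contra (fst snd : E → V) (col : E → C) (M : Finset E)
    (hM : IsRainbowMatching fst snd col M)
    (hMmax : ∀ S : Finset E, IsRainbowMatching fst snd col S → S.card ≤ M.card)
    (e : E) (h1 : col e ∉ mCols col M)
    (h2 : ∀ g ∈ M, endpts fst snd e ∩ endpts fst snd g = ∅) : False := by
  classical
  have heM : e ∉ M := fun h => h1 (Finset.mem_image_of_mem col h)
  have hS : IsRainbowMatching fst snd col (insert e M) := by
    constructor
    · intro a ha b hb hab
      rcases Finset.mem_insert.1 ha with rfl | ha' <;>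
        rcases Finset.mem_insert.1 hb with rfl | hb'
      · exact absurd rfl hab
      · exact h2 b hb'
      · rw [Finset.inter_comm]; exact h2 a ha'
      · exact hM.1 a ha' b hb' hab
    · intro a ha b hb hab
      rcases Finset.mem_insert.1 ha with rfl | ha' <;>
        rcases Finset.mem_insert.1 hb with rfl | hb'
      · rfl
      · exact absurd (by rw [hab]; exact Finset.mem_image_of_mem col hb') h1
      · exact absurd (by rw [← hab]; exact Finset.mem_image_of_mem col ha') h1
      · exact hM.2 a ha' b hb' hab
  have := hMmax _ hS
  rw [Finset.card_insert_of_notMem heM] at this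
  omega

lemma swap_extend_contra (fst snd : E → V) (col : E → C) (M : Finset E)
    (hM : IsRainbowMatching fst snd col M)
    (hMmax : ∀ S : Finset E, IsRainbowMatching fst snd col S → S.card ≤ M.card)
    (g : E) (hg : g ∈ M) (e₀ f : E)
    (he0v : endpts fst snd e₀ ∩ mVerts fst snd M = ∅)
    (he0c : col e₀ = col g)
    (hfc : col f ∉ mCols col M)
    (hfm : endpts fst snd f ∩ mVerts fst snd M ⊆ endpts fst snd g)
    (hfe : endpts fst snd f ∩ endpts fst snd e₀ = ∅) : False := by
  classical
  have he0M : e₀ ∉ M := by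
    intro h
    have heg : e₀ = g := hM.2 e₀ h g hg he0c
    have : fst e₀ ∈ endpts fst snd e₀ ∩ mVerts fst snd M :=
      Finset.mem_inter.2 ⟨by simp [mem_endpts],
        endpts_subset_mVerts h (by simp [mem_endpts])⟩
    rw [he0v] at this
    simp at this
  have hfM : f ∉ M := fun h => hfc (Finset.mem_image_of_mem col h)
  have hfe0 : f ≠ e₀ := by
    intro h
    subst h
    exact hfc (by rw [he0c]; exact Finset.mem_image_of_mem col hg)
  have hde : ∀ h ∈ M.erase g, endpts fst snd e₀ ∩ endpts fst snd h = ∅ := by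
    intro h hh
    apply Finset.eq_empty_of_forall_notMem
    intro x hx
    rw [Finset.mem_inter] at hx
    have : x ∈ endpts fst snd e₀ ∩ mVerts fst snd M :=
      Finset.mem_inter.2 ⟨hx.1, endpts_subset_mVerts (Finset.mem_of_mem_erase hh) hx.2⟩
    rw [he0v] at this
    simp at this
  have hdf : ∀ h ∈ M.erase g, endpts fst snd f ∩ endpts fst snd h = ∅ := by
    intro h hh
    apply Finset.eq_empty_of_forall_notMem
    intro x hx
    rw [Finset.mem_inter] at hx
    have hxg : x ∈ endpts fst snd g := hfm (Finset.mem_inter.2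
      ⟨hx.1, endpts_subset_mVerts (Finset.mem_of_mem_erase hh) hx.2⟩)
    have hgh : g ≠ h := (Finset.ne_of_mem_erase hh).symm
    have hemp := hM.1 g hg h (Finset.mem_of_mem_erase hh) hgh
    have : x ∈ endpts fst snd g ∩ endpts fst snd h := Finset.mem_inter.2 ⟨hxg, hx.2⟩
    rw [hemp] at this
    simp at this
  have hrm : IsRainbowMatching fst snd col (insert f (insert e₀ (M.erase g))) := by
    constructor
    · intro a ha b hb hab
      simp only [Finset.mem_insert] at ha hb
      rcases ha with rfl | rfl | ha' <;> rcases hb with rfl | rfl | hb'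
      · exact absurd rfl hab
      · exact hfe
      · exact hdf b hb'
      · rw [Finset.inter_comm]; exact hfe
      · exact absurd rfl hab
      · exact hde b hb'
      · rw [Finset.inter_comm]; exact hdf a ha'
      · rw [Finset.inter_comm]; exact hde a ha'
      · exact hM.1 a (Finset.mem_of_mem_erase ha') b (Finset.mem_of_mem_erase hb') hab
    · intro a ha b hb hab
      simp only [Finset.mem_insert] at ha hb
      rcases ha with rfl | rfl | ha' <;> rcases hb with rfl | rfl | hb'
      · rfl
      · exact absurd (by rw [hab, he0c]; exact Finset.mem_image_of_mem col hg) hfc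
      · refine absurd ?_ hfc
        rw [hab]
        exact Finset.mem_image_of_mem col (Finset.mem_of_mem_erase hb')
      · exact absurd (by rw [← hab, he0c]; exact Finset.mem_image_of_mem col hg) hfc
      · rfl
      · exfalso
        have : g = b := hM.2 g hg b (Finset.mem_of_mem_erase hb') (he0c ▸ hab)
        exact (Finset.ne_of_mem_erase hb') this.symm
      · refine absurd ?_ hfc
        rw [← hab]
        exact Finset.mem_image_of_mem col (Finset.mem_of_mem_erase ha')
      · exfalso
        have : a = g := hM.2 a (Finset.mem_of_mem_erase ha') g hg (hab.trans he0c)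
        exact (Finset.ne_of_mem_erase ha') this
      · exact hM.2 a (Finset.mem_of_mem_erase ha') b (Finset.mem_of_mem_erase hb') hab
  have hcard : (insert f (insert e₀ (M.erase g))).card = M.card + 1 := by
    rw [Finset.card_insert_of_notMem, Finset.card_insert_of_notMem, Finset.card_erase_of_mem hg]
    · have : 1 ≤ M.card := Finset.card_pos.2 ⟨g, hg⟩
      omega
    · exact fun h => he0M (Finset.mem_of_mem_erase h)
    · intro h
      rcases Finset.mem_insert.1 h with h' | h'
      · exact hfe0 h'
      · exact hfM (Finset.mem_of_mem_erase h')
  have := hMmax _ hrm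
  omega

end Aux

/-- **Lemma 3.2.** The set `R₁` of colours of the edges of `E₁` satisfies
`|R₁| ≥ αn`. -/
theorem stmt8
    {V E C : Type*} [Fintype V] [DecidableEq V] [Fintype E] [DecidableEq E]
    [Fintype C] [DecidableEq C]
    (ε k α : ℝ) (hε0 : 0 < ε) (hε1 : ε < 1/1000)
    (hk : k = (2:ℝ) ^ (20/ε)) (hα : α = ε/12)
    (n : ℕ) (hn : (n:ℝ) > k^2)
    (fst snd : E → V) (col : E → C)
    (hloop : ∀ e : E, fst e ≠ snd e)
    (hproper : ∀ e f : E, e ≠ f → (endpts fst snd e ∩ endpts fst snd f).Nonempty →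
      col e ≠ col f)
    (hC : Fintype.card C = n)
    (hmult : ∀ u v : V,
      ((Finset.univ.filter fun e : E => endpts fst snd e = ({u, v} : Finset V)).card : ℝ) ≤ n / k)
    (habund : ∀ c : C, (1+ε) * n ≤ ((Finset.univ.filter fun e : E => col e = c).card : ℝ))
    (M : Finset E) (hM : IsRainbowMatching fst snd col M)
    (hMmax : ∀ S : Finset E, IsRainbowMatching fst snd col S → S.card ≤ M.card)
    (hMlt : (M.card : ℝ) < n - k)
    :
    α * n ≤ (((E1 fst snd col M α).image col).card : ℝ) := by
  classical
  obtain ⟨hMdisj, hMcol⟩ := hM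
  have hα0 : 0 < α := by rw [hα]; linarith
  have hεle : ε ≤ 1 := by linarith
  have hklog : k = Real.exp (Real.log 2 * (20/ε)) := by
    rw [hk, Real.rpow_def_of_pos (by norm_num : (0:ℝ) < 2)]
  have hlog2 : (0.6931471803:ℝ) < Real.log 2 := Real.log_two_gt_d9
  have hk1 : (1:ℝ) ≤ k := by
    rw [hklog]
    have h0 : (0:ℝ) ≤ Real.log 2 * (20/ε) := by positivity
    linarith [Real.add_one_le_exp (Real.log 2 * (20/ε))]
  have hk2 : (169:ℝ)/ε^2 ≤ k^2 := by
    have hexp : (13:ℝ)/ε ≤ Real.exp (Real.log 2 * (20/ε)) := by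
      have h1 := Real.add_one_le_exp (Real.log 2 * (20/ε))
      have h2 : (13:ℝ)/ε ≤ Real.log 2 * (20/ε) := by
        rw [div_le_iff₀ hε0]
        have h3 : Real.log 2 * (20/ε) * ε = 20 * Real.log 2 := by field_simp
        rw [h3]; nlinarith
      linarith
    have h13 : (0:ℝ) ≤ 13/ε := by positivity
    have h169 : (169:ℝ)/ε^2 = (13/ε)^2 := by
      field_simp
      norm_num
    rw [h169, hklog]
    exact pow_le_pow_left₀ h13 hexp 2
  have hn2 : (169:ℝ)/ε^2 ≤ n := le_trans hk2 hn.le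
  have hnpos : (0:ℝ) < n := lt_of_lt_of_le (by positivity) hn2
  have hnum : 1 + 4/α ≤ 8*α*(n:ℝ) := by
    rw [hα]
    have h169 : (169:ℝ) ≤ n * ε^2 := by
      rw [div_le_iff₀ (by positivity : (0:ℝ) < ε^2)] at hn2; linarith
    have hgoal : (ε + 48)/ε ≤ 8*(ε/12)*n := by
      rw [div_le_iff₀ hε0]
      nlinarith
    have heq : 1 + 4/(ε/12) = (ε + 48)/ε := by field_simp; ring
    rw [heq]; exact hgoal
  have hMn : M.card < n := by
    have : (M.card:ℝ) < (n:ℝ) := by linarith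
    exact_mod_cast this
  have hMles : (M.card:ℝ) ≤ n := by exact_mod_cast hMn.le
  have hmCols : (mCols col M).card = M.card :=
    Finset.card_image_of_injOn fun e he f hf h => hMcol e he f hf h
  have hC0card : ((C0 col M).card : ℝ) = (n:ℝ) - M.card := by
    have h1 : (C0 col M).card = n - M.card := by
      rw [C0, Finset.card_sdiff_of_subset (Finset.subset_univ _), Finset.card_univ, hC, hmCols]
    rw [h1, Nat.cast_sub hMn.le]
  have hNpos : (0:ℝ) < ((C0 col M).card:ℝ) := by rw [hC0card]; linarith
  -- splitting a colour class into both-in, external, both-out parts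
  have hclass_card : ∀ c : C,
      (Finset.univ.filter fun e : E => col e = c).card ≤
        M.card + (Finset.univ.filter fun e : E => IsExternal fst snd M e ∧ col e = c).card
          + (Finset.univ.filter fun e : E => col e = c ∧
              ∀ x ∈ endpts fst snd e, x ∉ mVerts fst snd M).card := by
    intro c
    have hsub : (Finset.univ.filter fun e : E => col e = c) ⊆
        ((Finset.univ.filter fun e : E => col e = c ∧ endpts fst snd e ⊆ mVerts fst snd M) ∪
          Finset.univ.filter fun e : E => IsExternal fst snd M e ∧ col e = c) ∪
        Finset.univ.filter fun e : E => col e = c ∧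
          ∀ x ∈ endpts fst snd e, x ∉ mVerts fst snd M := by
      intro e he
      simp only [Finset.mem_filter, Finset.mem_univ, true_and] at he
      simp only [Finset.mem_union, Finset.mem_filter, Finset.mem_univ, true_and]
      by_cases h1 : fst e ∈ mVerts fst snd M <;> by_cases h2 : snd e ∈ mVerts fst snd M
      · exact Or.inl (Or.inl ⟨he, fun x hx => by
          rcases mem_endpts.1 hx with rfl | rfl <;> assumption⟩)
      · exact Or.inl (Or.inr ⟨Or.inl ⟨h1, h2⟩, he⟩)
      · exact Or.inl (Or.inr ⟨Or.inr ⟨h1, h2⟩, he⟩)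
      · exact Or.inr ⟨he, fun x hx => by
          rcases mem_endpts.1 hx with rfl | rfl <;> assumption⟩
    have h1 := Finset.card_le_card hsub
    have h2 := Finset.card_union_le
      ((Finset.univ.filter fun e : E => col e = c ∧ endpts fst snd e ⊆ mVerts fst snd M) ∪
        Finset.univ.filter fun e : E => IsExternal fst snd M e ∧ col e = c)
      (Finset.univ.filter fun e : E => col e = c ∧
          ∀ x ∈ endpts fst snd e, x ∉ mVerts fst snd M)
    have h3 := Finset.card_union_le
      (Finset.univ.filter fun e : E => col e = c ∧ endpts fst snd e ⊆ mVerts fst snd M)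
      (Finset.univ.filter fun e : E => IsExternal fst snd M e ∧ col e = c)
    have h4 := bothin_card_le fst snd col hloop hproper M c
    omega
  -- colours of C0 have no edge outside V(M)
  have hBO0 : ∀ c ∈ C0 col M, (Finset.univ.filter fun e : E => col e = c ∧
      ∀ x ∈ endpts fst snd e, x ∉ mVerts fst snd M) = ∅ := by
    intro c hc
    rw [Finset.filter_eq_empty_iff]
    rintro e - ⟨hce, hout⟩
    apply extend_contra fst snd col M ⟨hMdisj, hMcol⟩ hMmax e
    · rw [hce]; exact (Finset.mem_sdiff.1 hc).2
    · intro g hg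
      apply Finset.eq_empty_of_forall_notMem
      intro x hx
      rw [Finset.mem_inter] at hx
      exact hout x hx.1 (endpts_subset_mVerts hg hx.2)
  have hext_lb : ∀ c ∈ C0 col M, (1+ε)*n - M.card ≤
      ((Finset.univ.filter fun e : E => IsExternal fst snd M e ∧ col e = c).card : ℝ) := by
    intro c hc
    have h1 := hclass_card c
    rw [hBO0 c hc] at h1
    simp only [Finset.card_empty, add_zero] at h1
    have h2 := habund c
    have h1' : ((Finset.univ.filter fun e : E => col e = c).card : ℝ) ≤
        (M.card:ℝ) +
        ((Finset.univ.filter fun e : E => IsExternal fst snd M e ∧ col e = c).card : ℝ) := by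
      exact_mod_cast h1
    linarith
  -- F is nonempty
  have hFne : (Fcols fst snd col M α).Nonempty := by
    by_contra hF
    rw [Finset.not_nonempty_iff_eq_empty] at hF
    have hdeg : ∀ v ∈ mVerts fst snd M,
        (extC0deg fst snd col M v : ℝ) < α * ((C0 col M).card:ℝ) := by
      intro v hv
      by_contra hd
      push_neg at hd
      obtain ⟨g, hgM, hvg⟩ := Finset.mem_biUnion.1 hv
      have hgE0 : g ∈ E0 fst snd col M α :=
        Finset.mem_filter.2 ⟨hgM, v, hvg, hd⟩
      have : col g ∈ Fcols fst snd col M α := Finset.mem_image_of_mem col hgE0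
      rw [hF] at this
      simp at this
    have hXeq : (Finset.univ.filter fun e : E =>
        IsExternal fst snd M e ∧ col e ∈ C0 col M) =
        (C0 col M).biUnion fun c => Finset.univ.filter fun e : E =>
        IsExternal fst snd M e ∧ col e = c := by
      ext e
      simp only [Finset.mem_filter, Finset.mem_univ, true_and, Finset.mem_biUnion]
      constructor
      · rintro ⟨h1, h2⟩; exact ⟨col e, h2, h1, rfl⟩
      · rintro ⟨c, hc, h1, rfl⟩; exact ⟨h1, hc⟩
    have hXcard : ((C0 col M).card : ℝ) * ((1+ε)*n - M.card) ≤
        (((Finset.univ.filter fun e : E =>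
          IsExternal fst snd M e ∧ col e ∈ C0 col M).card) : ℝ) := by
      rw [hXeq, Finset.card_biUnion, Nat.cast_sum]
      · have := Finset.card_nsmul_le_sum (C0 col M)
          (fun c => ((Finset.univ.filter fun e : E =>
            IsExternal fst snd M e ∧ col e = c).card : ℝ))
          ((1+ε)*n - M.card) (fun c hc => hext_lb c hc)
        rwa [nsmul_eq_mul] at this
      · intro a ha b hb hab
        rw [Function.onFun, Finset.disjoint_left]
        intro e he he'
        simp only [Finset.mem_filter] at he he'
        exact hab (he.2.2.symm.trans he'.2.2)
    have hXub : (((Finset.univ.filter fun e : E =>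
        IsExternal fst snd M e ∧ col e ∈ C0 col M).card) : ℝ) ≤
        (2*M.card) * (α * ((C0 col M).card:ℝ)) := by
      have hdegX : ∀ v : V, ((Finset.univ.filter fun e : E =>
          IsExternal fst snd M e ∧ col e ∈ C0 col M).filter
            fun e => v ∈ endpts fst snd e).card = extC0deg fst snd col M v := by
        intro v
        simp only [extC0deg, Finset.filter_filter]
        congr 1
        ext e
        simp only [Finset.mem_filter, Finset.mem_univ, true_and]
        tauto
      have hswap : (Finset.univ.filter fun e : E =>
          IsExternal fst snd M e ∧ col e ∈ C0 col M).card ≤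
          ∑ v ∈ mVerts fst snd M, extC0deg fst snd col M v := by
        calc (Finset.univ.filter fun e : E =>
            IsExternal fst snd M e ∧ col e ∈ C0 col M).card
            = ∑ _e ∈ (Finset.univ.filter fun e : E =>
              IsExternal fst snd M e ∧ col e ∈ C0 col M), 1 := by simp
        _ ≤ ∑ e ∈ (Finset.univ.filter fun e : E =>
              IsExternal fst snd M e ∧ col e ∈ C0 col M),
              ((mVerts fst snd M).filter fun v => v ∈ endpts fst snd e).card := by
            apply Finset.sum_le_sum
            intro e he
            simp only [Finset.mem_filter, Finset.mem_univ, true_and] at he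
            rcases he.1 with ⟨h1, h2⟩ | ⟨h1, h2⟩
            · exact Finset.card_pos.2 ⟨fst e, Finset.mem_filter.2 ⟨h1, by simp [mem_endpts]⟩⟩
            · exact Finset.card_pos.2 ⟨snd e, Finset.mem_filter.2 ⟨h2, by simp [mem_endpts]⟩⟩
        _ = ∑ e ∈ (Finset.univ.filter fun e : E =>
              IsExternal fst snd M e ∧ col e ∈ C0 col M),
              ∑ v ∈ mVerts fst snd M, if v ∈ endpts fst snd e then 1 else 0 := by
            simp [Finset.card_filter]
        _ = ∑ v ∈ mVerts fst snd M, ∑ e ∈ (Finset.univ.filter fun e : E =>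
              IsExternal fst snd M e ∧ col e ∈ C0 col M),
              if v ∈ endpts fst snd e then 1 else 0 := Finset.sum_comm
        _ = ∑ v ∈ mVerts fst snd M, extC0deg fst snd col M v := by
            refine Finset.sum_congr rfl fun v _ => ?_
            rw [← hdegX v, Finset.card_filter]
      have h1 : (((Finset.univ.filter fun e : E =>
          IsExternal fst snd M e ∧ col e ∈ C0 col M).card) : ℝ) ≤
          ∑ v ∈ mVerts fst snd M, (extC0deg fst snd col M v : ℝ) := by
        rw [← Nat.cast_sum]
        exact_mod_cast hswap
      have h2 : ∑ v ∈ mVerts fst snd M, (extC0deg fst snd col M v : ℝ)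
          ≤ (mVerts fst snd M).card • (α * ((C0 col M).card:ℝ)) :=
        Finset.sum_le_card_nsmul _ _ _ fun v hv => (hdeg v hv).le
      rw [nsmul_eq_mul] at h2
      have h3 : ((mVerts fst snd M).card : ℝ) ≤ 2*M.card := by
        exact_mod_cast mVerts_card_le fst snd M
      have h4 : (0:ℝ) ≤ α * ((C0 col M).card:ℝ) := by positivity
      nlinarith
    have key : ((C0 col M).card:ℝ) * ((1+ε)*n - M.card) ≤
        ((C0 col M).card:ℝ) * (2*α*M.card) :=
      le_trans hXcard (le_of_le_of_eq hXub (by ring))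
    have key2 : (1+ε)*n - M.card ≤ 2*α*(M.card:ℝ) := (mul_le_mul_iff_of_pos_left hNpos).1 key
    rw [hα] at key2
    nlinarith
  have hFpos : (0:ℝ) < ((Fcols fst snd col M α).card:ℝ) := by
    exact_mod_cast Finset.card_pos.2 hFne
  -- witnesses for flexible colours
  have hE0wit : ∀ c ∈ Fcols fst snd col M α, ∃ g ∈ M, col g = c ∧ ∃ u ∈ endpts fst snd g,
      α * ((C0 col M).card:ℝ) ≤ (extC0deg fst snd col M u : ℝ) := by
    intro c hc
    obtain ⟨g, hg, hgc⟩ := Finset.mem_image.1 hc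
    rw [E0, Finset.mem_filter] at hg
    exact ⟨g, hg.1, hgc, hg.2⟩
  -- at most one edge of a flexible colour outside V(M)
  have hBO1 : ∀ c ∈ Fcols fst snd col M α, (Finset.univ.filter fun e : E => col e = c ∧
      ∀ x ∈ endpts fst snd e, x ∉ mVerts fst snd M).card ≤ 1 := by
    intro c hc
    obtain ⟨g, hgM, hgc, u, hu, hudeg⟩ := hE0wit c hc
    have hDu : (Finset.univ.filter fun f : E => IsExternal fst snd M f ∧
        col f ∈ C0 col M ∧ u ∈ endpts fst snd f).Nonempty := by
      rw [← Finset.card_pos]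
      by_contra h
      push_neg at h
      have h0 : extC0deg fst snd col M u = 0 := by
        simp only [extC0deg]
        omega
      rw [h0] at hudeg
      norm_num at hudeg
      nlinarith [mul_pos hα0 hNpos]
    obtain ⟨f0, hf0⟩ := hDu
    simp only [Finset.mem_filter, Finset.mem_univ, true_and] at hf0
    obtain ⟨hf0ext, hf0c, hf0u⟩ := hf0
    rw [Finset.card_le_one]
    intro a ha b hb
    by_contra hab
    simp only [Finset.mem_filter, Finset.mem_univ, true_and] at ha hb
    have hdab := disj_same_col hproper hab (ha.1.trans hb.1.symm)
    have humem : u ∈ mVerts fst snd M := endpts_subset_mVerts hgM hu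
    have hmiss : endpts fst snd f0 ∩ endpts fst snd a = ∅ ∨
        endpts fst snd f0 ∩ endpts fst snd b = ∅ := by
      by_contra hcon
      push_neg at hcon
      obtain ⟨x, hx⟩ := hcon.1
      obtain ⟨y, hy⟩ := hcon.2
      rw [Finset.mem_inter] at hx hy
      have hxy : x ≠ y := by
        intro h
        subst h
        have hmm : x ∈ endpts fst snd a ∩ endpts fst snd b :=
          Finset.mem_inter.2 ⟨hx.2, hy.2⟩
        rw [hdab] at hmm
        simp at hmm
      have hux : u ≠ x := fun h => ha.2 x hx.2 (h ▸ humem)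
      have huy : u ≠ y := fun h => hb.2 y hy.2 (h ▸ humem)
      have hsub : ({x, y, u} : Finset V) ⊆ endpts fst snd f0 := by
        intro z hz
        simp only [Finset.mem_insert, Finset.mem_singleton] at hz
        rcases hz with rfl | rfl | rfl
        · exact hx.1
        · exact hy.1
        · exact hf0u
      have hc3 : ({x, y, u} : Finset V).card = 3 :=
        Finset.card_eq_three.2 ⟨x, y, u, hxy, Ne.symm hux, Ne.symm huy, rfl⟩
      have := (Finset.card_le_card hsub).trans (card_endpts_le fst snd f0)
      omega
    have hfc' : col f0 ∉ mCols col M := (Finset.mem_sdiff.1 hf0c).2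
    have hfm' : endpts fst snd f0 ∩ mVerts fst snd M ⊆ endpts fst snd g := by
      intro x hx
      rw [Finset.mem_inter] at hx
      have hxu : x = u := external_unique hf0ext hx.1 hx.2 hf0u humem
      rw [hxu]; exact hu
    rcases hmiss with h | h
    · refine swap_extend_contra fst snd col M ⟨hMdisj, hMcol⟩ hMmax g hgM a f0 ?_
        (ha.1.trans hgc.symm) hfc' hfm' h
      apply Finset.eq_empty_of_forall_notMem
      intro x hx
      rw [Finset.mem_inter] at hx
      exact ha.2 x hx.1 hx.2
    · refine swap_extend_contra fst snd col M ⟨hMdisj, hMcol⟩ hMmax g hgM b f0 ?_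
        (hb.1.trans hgc.symm) hfc' hfm' h
      apply Finset.eq_empty_of_forall_notMem
      intro x hx
      rw [Finset.mem_inter] at hx
      exact hb.2 x hx.1 hx.2
  have hextF_lb : ∀ c ∈ Fcols fst snd col M α, (1+ε)*n - M.card - 1 ≤
      ((Finset.univ.filter fun e : E => IsExternal fst snd M e ∧ col e = c).card : ℝ) := by
    intro c hc
    have h1 := hclass_card c
    have h2 := hBO1 c hc
    have h3 := habund c
    have h1' : ((Finset.univ.filter fun e : E => col e = c).card : ℝ) ≤
        (M.card:ℝ) +
        ((Finset.univ.filter fun e : E => IsExternal fst snd M e ∧ col e = c).card : ℝ) + 1 := by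
      have : (Finset.univ.filter fun e : E => col e = c).card ≤
          M.card + (Finset.univ.filter fun e : E =>
            IsExternal fst snd M e ∧ col e = c).card + 1 := by omega
      exact_mod_cast this
    linarith
  -- few bad edges of each flexible colour
  have hbad : ∀ c ∈ Fcols fst snd col M α,
      ((Finset.univ.filter fun e : E => IsExternal fst snd M e ∧ col e = c ∧
        ¬ IsGood fst snd col M α e).card : ℝ) ≤ 4/α := by
    intro c hc
    obtain ⟨g, hgM, hgc, u, hu, hudeg⟩ := hE0wit c hc
    have hDucard : α * ((C0 col M).card:ℝ) ≤
        (((Finset.univ.filter fun f : E => IsExternal fst snd M f ∧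
          col f ∈ C0 col M ∧ u ∈ endpts fst snd f).card):ℝ) := hudeg
    have hDuN : (((Finset.univ.filter fun f : E => IsExternal fst snd M f ∧
        col f ∈ C0 col M ∧ u ∈ endpts fst snd f).card):ℝ) ≤ ((C0 col M).card:ℝ) := by
      have := card_le_of_colors col hproper u
        (Finset.univ.filter fun f : E => IsExternal fst snd M f ∧
          col f ∈ C0 col M ∧ u ∈ endpts fst snd f) (C0 col M) ?_
      · exact_mod_cast this
      · intro f hf
        rw [Finset.mem_filter] at hf
        exact ⟨hf.2.2.1, hf.2.2.2⟩
    have hstep1 : ∀ e ∈ (Finset.univ.filter fun e : E => IsExternal fst snd M e ∧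
        col e = c ∧ ¬ IsGood fst snd col M α e),
        α * ((C0 col M).card:ℝ) / 2 ≤
        (((Finset.univ.filter fun f : E => IsExternal fst snd M f ∧
          col f ∈ C0 col M ∧ u ∈ endpts fst snd f).filter fun f =>
            (endpts fst snd f ∩ endpts fst snd e).Nonempty).card : ℝ) := by
      intro e he
      rw [Finset.mem_filter] at he
      obtain ⟨-, heext, hec, hng⟩ := he
      have hWlt : ((Finset.univ.filter fun f : E => IsExternal fst snd M f ∧
          col f ∈ C0 col M ∧
          (endpts fst snd f ∩ endpts fst snd g).Nonempty ∧
          endpts fst snd f ∩ endpts fst snd e = ∅).card : ℝ) <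
          α * ((C0 col M).card:ℝ)/2 := by
        rw [← not_le]
        intro hle
        exact hng ⟨heext, by rw [hec]; exact hc, g, hgM, hgc.trans hec.symm, hle⟩
      have hsplit := Finset.card_filter_add_card_filter_not
        (s := Finset.univ.filter fun f : E => IsExternal fst snd M f ∧
          col f ∈ C0 col M ∧ u ∈ endpts fst snd f)
        (p := fun f => (endpts fst snd f ∩ endpts fst snd e).Nonempty)
      have hDe : ((Finset.univ.filter fun f : E => IsExternal fst snd M f ∧
          col f ∈ C0 col M ∧ u ∈ endpts fst snd f).filter fun f =>
            ¬ (endpts fst snd f ∩ endpts fst snd e).Nonempty) ⊆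
          Finset.univ.filter fun f : E => IsExternal fst snd M f ∧ col f ∈ C0 col M ∧
            (endpts fst snd f ∩ endpts fst snd g).Nonempty ∧
            endpts fst snd f ∩ endpts fst snd e = ∅ := by
        intro f hf
        simp only [Finset.mem_filter, Finset.mem_univ, true_and] at hf ⊢
        obtain ⟨⟨h1, h2, h3⟩, h4⟩ := hf
        refine ⟨h1, h2, ⟨u, Finset.mem_inter.2 ⟨h3, hu⟩⟩, ?_⟩
        rwa [Finset.not_nonempty_iff_eq_empty] at h4
      have hDecard := Finset.card_le_card hDe
      have hDecard' : (((Finset.univ.filter fun f : E => IsExternal fst snd M f ∧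
          col f ∈ C0 col M ∧ u ∈ endpts fst snd f).filter fun f =>
            ¬ (endpts fst snd f ∩ endpts fst snd e).Nonempty).card : ℝ) <
          α * ((C0 col M).card:ℝ)/2 :=
        lt_of_le_of_lt (by exact_mod_cast hDecard) hWlt
      have hsplit' : (((Finset.univ.filter fun f : E => IsExternal fst snd M f ∧
          col f ∈ C0 col M ∧ u ∈ endpts fst snd f).filter fun f =>
            (endpts fst snd f ∩ endpts fst snd e).Nonempty).card : ℝ) +
          (((Finset.univ.filter fun f : E => IsExternal fst snd M f ∧
          col f ∈ C0 col M ∧ u ∈ endpts fst snd f).filter fun f =>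
            ¬ (endpts fst snd f ∩ endpts fst snd e).Nonempty).card : ℝ) =
          (((Finset.univ.filter fun f : E => IsExternal fst snd M f ∧
          col f ∈ C0 col M ∧ u ∈ endpts fst snd f).card):ℝ) := by
        exact_mod_cast hsplit
      linarith
    have hpairs : ∑ e ∈ (Finset.univ.filter fun e : E => IsExternal fst snd M e ∧
        col e = c ∧ ¬ IsGood fst snd col M α e),
        ((Finset.univ.filter fun f : E => IsExternal fst snd M f ∧
          col f ∈ C0 col M ∧ u ∈ endpts fst snd f).filter fun f =>
            (endpts fst snd f ∩ endpts fst snd e).Nonempty).card =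
        ∑ f ∈ (Finset.univ.filter fun f : E => IsExternal fst snd M f ∧
          col f ∈ C0 col M ∧ u ∈ endpts fst snd f),
        ((Finset.univ.filter fun e : E => IsExternal fst snd M e ∧
        col e = c ∧ ¬ IsGood fst snd col M α e).filter fun e =>
            (endpts fst snd f ∩ endpts fst snd e).Nonempty).card := by
      simp only [Finset.card_filter]
      exact Finset.sum_comm
    have hfib : ∀ f ∈ (Finset.univ.filter fun f : E => IsExternal fst snd M f ∧
          col f ∈ C0 col M ∧ u ∈ endpts fst snd f),
        ((Finset.univ.filter fun e : E => IsExternal fst snd M e ∧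
        col e = c ∧ ¬ IsGood fst snd col M α e).filter fun e =>
            (endpts fst snd f ∩ endpts fst snd e).Nonempty).card ≤ 2 := by
      intro f hf
      apply card_le_two_of_meet hproper f c
      intro e he
      simp only [Finset.mem_filter, Finset.mem_univ, true_and] at he
      exact ⟨he.1.2.1, by rw [Finset.inter_comm]; exact he.2⟩
    have hsum_ub : ∑ e ∈ (Finset.univ.filter fun e : E => IsExternal fst snd M e ∧
        col e = c ∧ ¬ IsGood fst snd col M α e),
        ((Finset.univ.filter fun f : E => IsExternal fst snd M f ∧
          col f ∈ C0 col M ∧ u ∈ endpts fst snd f).filter fun f =>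
            (endpts fst snd f ∩ endpts fst snd e).Nonempty).card ≤
        2 * (Finset.univ.filter fun f : E => IsExternal fst snd M f ∧
          col f ∈ C0 col M ∧ u ∈ endpts fst snd f).card := by
      rw [hpairs]
      calc _ ≤ ∑ _f ∈ (Finset.univ.filter fun f : E => IsExternal fst snd M f ∧
          col f ∈ C0 col M ∧ u ∈ endpts fst snd f), 2 := Finset.sum_le_sum hfib
      _ = _ := by rw [Finset.sum_const, smul_eq_mul, mul_comm]
    have hsum_lb : (((Finset.univ.filter fun e : E => IsExternal fst snd M e ∧
        col e = c ∧ ¬ IsGood fst snd col M α e).card):ℝ) *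
        (α * ((C0 col M).card:ℝ)/2) ≤
        ((∑ e ∈ (Finset.univ.filter fun e : E => IsExternal fst snd M e ∧
        col e = c ∧ ¬ IsGood fst snd col M α e),
        ((Finset.univ.filter fun f : E => IsExternal fst snd M f ∧
          col f ∈ C0 col M ∧ u ∈ endpts fst snd f).filter fun f =>
            (endpts fst snd f ∩ endpts fst snd e).Nonempty).card : ℕ) : ℝ) := by
      rw [Nat.cast_sum]
      have := Finset.card_nsmul_le_sum (Finset.univ.filter fun e : E =>
          IsExternal fst snd M e ∧ col e = c ∧ ¬ IsGood fst snd col M α e)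
        (fun e => (((Finset.univ.filter fun f : E => IsExternal fst snd M f ∧
          col f ∈ C0 col M ∧ u ∈ endpts fst snd f).filter fun f =>
            (endpts fst snd f ∩ endpts fst snd e).Nonempty).card : ℝ))
        (α * ((C0 col M).card:ℝ)/2) hstep1
      rwa [nsmul_eq_mul] at this
    have hfin : (((Finset.univ.filter fun e : E => IsExternal fst snd M e ∧
        col e = c ∧ ¬ IsGood fst snd col M α e).card):ℝ) *
        (α * ((C0 col M).card:ℝ)/2) ≤ 2*((C0 col M).card:ℝ) := by
      refine le_trans hsum_lb (le_trans ?_ (by linarith [hDuN] : (2:ℝ) *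
        (((Finset.univ.filter fun f : E => IsExternal fst snd M f ∧
          col f ∈ C0 col M ∧ u ∈ endpts fst snd f).card):ℝ) ≤ 2*((C0 col M).card:ℝ)))
      exact_mod_cast hsum_ub
    rw [le_div_iff₀ hα0]
    have hbc : (0:ℝ) ≤ (((Finset.univ.filter fun e : E =>
        IsExternal fst snd M e ∧ col e = c ∧ ¬ IsGood fst snd col M α e).card):ℝ) :=
      Nat.cast_nonneg _
    nlinarith [hfin, hNpos, hbc]
  -- many good edges of each flexible colour
  have hgood : ∀ c ∈ Fcols fst snd col M α, (1+ε)*n - M.card - 1 - 4/α ≤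
      ((Finset.univ.filter fun e : E => IsGood fst snd col M α e ∧ col e = c).card : ℝ) := by
    intro c hc
    have hsub : (Finset.univ.filter fun e : E => IsExternal fst snd M e ∧ col e = c) ⊆
        (Finset.univ.filter fun e : E => IsGood fst snd col M α e ∧ col e = c) ∪
        (Finset.univ.filter fun e : E => IsExternal fst snd M e ∧ col e = c ∧
          ¬ IsGood fst snd col M α e) := by
      intro e he
      simp only [Finset.mem_filter, Finset.mem_univ, true_and, Finset.mem_union] at he ⊢
      by_cases hg : IsGood fst snd col M α e
      · exact Or.inl ⟨hg, he.2⟩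
      · exact Or.inr ⟨he.1, he.2, hg⟩
    have h1 := (Finset.card_le_card hsub).trans (Finset.card_union_le _ _)
    have h2 := hextF_lb c hc
    have h3 := hbad c hc
    have h1' : ((Finset.univ.filter fun e : E =>
        IsExternal fst snd M e ∧ col e = c).card : ℝ) ≤
        ((Finset.univ.filter fun e : E => IsGood fst snd col M α e ∧ col e = c).card : ℝ) +
        ((Finset.univ.filter fun e : E => IsExternal fst snd M e ∧ col e = c ∧
          ¬ IsGood fst snd col M α e).card : ℝ) := by
      exact_mod_cast h1
    linarith
  -- total number of good edges
  have hGdeq : (Finset.univ.filter fun e : E => IsGood fst snd col M α e) =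
      (Fcols fst snd col M α).biUnion fun c => Finset.univ.filter fun e : E =>
      IsGood fst snd col M α e ∧ col e = c := by
    ext e
    simp only [Finset.mem_filter, Finset.mem_univ, true_and, Finset.mem_biUnion]
    constructor
    · intro hg
      exact ⟨col e, hg.2.1, hg, rfl⟩
    · rintro ⟨c, hc, hg, -⟩
      exact hg
  have hTlb : ((Fcols fst snd col M α).card:ℝ) * ((1+ε)*n - M.card - 1 - 4/α) ≤
      (((Finset.univ.filter fun e : E => IsGood fst snd col M α e).card):ℝ) := by
    rw [hGdeq, Finset.card_biUnion, Nat.cast_sum]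
    · have := Finset.card_nsmul_le_sum (Fcols fst snd col M α)
        (fun c => ((Finset.univ.filter fun e : E =>
          IsGood fst snd col M α e ∧ col e = c).card : ℝ))
        ((1+ε)*n - M.card - 1 - 4/α) (fun c hc => hgood c hc)
      rwa [nsmul_eq_mul] at this
    · intro a ha b hb hab
      rw [Function.onFun, Finset.disjoint_left]
      intro e he he'
      simp only [Finset.mem_filter] at he he'
      exact hab (he.2.2.symm.trans he'.2.2)
  have hsum1 : (((Finset.univ.filter fun e : E => IsGood fst snd col M α e).card):ℝ) ≤
      ∑ v ∈ mVerts fst snd M, (goodDeg fst snd col M α v : ℝ) := by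
    have hdegX : ∀ v : V, goodDeg fst snd col M α v =
        ((Finset.univ.filter fun e : E => IsGood fst snd col M α e).filter
          fun e => v ∈ endpts fst snd e).card := by
      intro v
      simp only [goodDeg, Finset.filter_filter]
    have hswap : (Finset.univ.filter fun e : E => IsGood fst snd col M α e).card ≤
        ∑ v ∈ mVerts fst snd M, goodDeg fst snd col M α v := by
      calc (Finset.univ.filter fun e : E => IsGood fst snd col M α e).card
          = ∑ _e ∈ (Finset.univ.filter fun e : E => IsGood fst snd col M α e), 1 := by simp
      _ ≤ ∑ e ∈ (Finset.univ.filter fun e : E => IsGood fst snd col M α e),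
            ((mVerts fst snd M).filter fun v => v ∈ endpts fst snd e).card := by
          apply Finset.sum_le_sum
          intro e he
          simp only [Finset.mem_filter, Finset.mem_univ, true_and] at he
          rcases he.1 with ⟨h1, h2⟩ | ⟨h1, h2⟩
          · exact Finset.card_pos.2 ⟨fst e, Finset.mem_filter.2 ⟨h1, by simp [mem_endpts]⟩⟩
          · exact Finset.card_pos.2 ⟨snd e, Finset.mem_filter.2 ⟨h2, by simp [mem_endpts]⟩⟩
      _ = ∑ e ∈ (Finset.univ.filter fun e : E => IsGood fst snd col M α e),
            ∑ v ∈ mVerts fst snd M, if v ∈ endpts fst snd e then 1 else 0 := by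
          simp [Finset.card_filter]
      _ = ∑ v ∈ mVerts fst snd M, ∑ e ∈ (Finset.univ.filter fun e : E =>
            IsGood fst snd col M α e), if v ∈ endpts fst snd e then 1 else 0 :=
          Finset.sum_comm
      _ = ∑ v ∈ mVerts fst snd M, goodDeg fst snd col M α v := by
          refine Finset.sum_congr rfl fun v _ => ?_
          rw [hdegX v, Finset.card_filter]
    rw [← Nat.cast_sum]
    exact_mod_cast hswap
  have hgdle : ∀ v : V, (goodDeg fst snd col M α v : ℝ) ≤
      ((Fcols fst snd col M α).card:ℝ) := by
    intro v
    have : goodDeg fst snd col M α v ≤ (Fcols fst snd col M α).card := by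
      apply card_le_of_colors col hproper v _ (Fcols fst snd col M α)
      intro e he
      rw [Finset.mem_filter] at he
      exact ⟨he.2.1.2.1, he.2.2⟩
    exact_mod_cast this
  have hsum2 : ∑ v ∈ mVerts fst snd M, (goodDeg fst snd col M α v : ℝ) ≤
      (((mVerts fst snd M).filter (fun v =>
        α * ((Fcols fst snd col M α).card : ℝ) ≤ (goodDeg fst snd col M α v : ℝ))).card:ℝ) *
        ((Fcols fst snd col M α).card:ℝ) +
      (2*(M.card:ℝ)) * (α * ((Fcols fst snd col M α).card:ℝ)) := by
    rw [← Finset.sum_filter_add_sum_filter_not (mVerts fst snd M)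
      (fun v => α * ((Fcols fst snd col M α).card : ℝ) ≤ (goodDeg fst snd col M α v : ℝ))]
    have hA := Finset.sum_le_card_nsmul ((mVerts fst snd M).filter (fun v =>
        α * ((Fcols fst snd col M α).card : ℝ) ≤ (goodDeg fst snd col M α v : ℝ)))
      (fun v => (goodDeg fst snd col M α v : ℝ)) (((Fcols fst snd col M α).card:ℝ))
      (fun v _ => hgdle v)
    rw [nsmul_eq_mul] at hA
    have hB := Finset.sum_le_card_nsmul ((mVerts fst snd M).filter (fun v =>
        ¬ (α * ((Fcols fst snd col M α).card : ℝ) ≤ (goodDeg fst snd col M α v : ℝ))))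
      (fun v => (goodDeg fst snd col M α v : ℝ))
      (α * ((Fcols fst snd col M α).card:ℝ))
      (fun v hv => by
        rw [Finset.mem_filter] at hv
        exact (not_le.1 hv.2).le)
    rw [nsmul_eq_mul] at hB
    have hC2 : (((mVerts fst snd M).filter (fun v =>
        ¬ (α * ((Fcols fst snd col M α).card : ℝ) ≤
          (goodDeg fst snd col M α v : ℝ)))).card:ℝ) ≤ 2*(M.card:ℝ) := by
      have := (Finset.card_le_card (Finset.filter_subset (fun v =>
        ¬ (α * ((Fcols fst snd col M α).card : ℝ) ≤
          (goodDeg fst snd col M α v : ℝ))) (mVerts fst snd M))).trans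
        (mVerts_card_le fst snd M)
      exact_mod_cast this
    have hpos : (0:ℝ) ≤ α * ((Fcols fst snd col M α).card:ℝ) := by positivity
    nlinarith [hB, hC2, hpos]
  -- many heavy vertices
  have hHvlb : 2*α*(n:ℝ) ≤
      (((mVerts fst snd M).filter (fun v =>
        α * ((Fcols fst snd col M α).card : ℝ) ≤
          (goodDeg fst snd col M α v : ℝ))).card:ℝ) := by
    have h1 : ((Fcols fst snd col M α).card:ℝ) * ((1+ε)*n - M.card - 1 - 4/α) ≤
        ((Fcols fst snd col M α).card:ℝ) *
        ((((mVerts fst snd M).filter (fun v =>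
          α * ((Fcols fst snd col M α).card : ℝ) ≤
          (goodDeg fst snd col M α v : ℝ))).card:ℝ) + 2*α*(M.card:ℝ)) := by
      calc ((Fcols fst snd col M α).card:ℝ) * ((1+ε)*n - M.card - 1 - 4/α)
          ≤ (((Finset.univ.filter fun e : E => IsGood fst snd col M α e).card):ℝ) := hTlb
      _ ≤ ∑ v ∈ mVerts fst snd M, (goodDeg fst snd col M α v : ℝ) := hsum1
      _ ≤ _ := hsum2
      _ = _ := by ring
    have h2 : (1+ε)*n - M.card - 1 - 4/α ≤
        (((mVerts fst snd M).filter (fun v =>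
          α * ((Fcols fst snd col M α).card : ℝ) ≤
          (goodDeg fst snd col M α v : ℝ))).card:ℝ) + 2*α*(M.card:ℝ) :=
      (mul_le_mul_iff_of_pos_left hFpos).1 h1
    have hαM : α*(M.card:ℝ) ≤ α*(n:ℝ) := mul_le_mul_of_nonneg_left hMles hα0.le
    have hε12 : ε = 12*α := by rw [hα]; ring
    rw [hε12] at h2
    nlinarith [hnum, h2, hαM]
  -- heavy vertices live on E1 edges
  have hHvsub : ((mVerts fst snd M).filter (fun v =>
      α * ((Fcols fst snd col M α).card : ℝ) ≤ (goodDeg fst snd col M α v : ℝ))) ⊆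
      (E1 fst snd col M α).biUnion (endpts fst snd) := by
    intro v hv
    rw [Finset.mem_filter] at hv
    obtain ⟨hvm, hvcond⟩ := hv
    obtain ⟨g, hgM, hvg⟩ := Finset.mem_biUnion.1 hvm
    refine Finset.mem_biUnion.2 ⟨g, ?_, hvg⟩
    rw [E1, Finset.mem_filter]
    exact ⟨hgM, v, hvg, hvcond⟩
  have hHvcard : (((mVerts fst snd M).filter (fun v =>
      α * ((Fcols fst snd col M α).card : ℝ) ≤
        (goodDeg fst snd col M α v : ℝ))).card) ≤ 2*(E1 fst snd col M α).card := by
    calc _ ≤ ((E1 fst snd col M α).biUnion (endpts fst snd)).card :=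
        Finset.card_le_card hHvsub
    _ ≤ ∑ e ∈ E1 fst snd col M α, (endpts fst snd e).card := Finset.card_biUnion_le
    _ ≤ ∑ _e ∈ E1 fst snd col M α, 2 :=
        Finset.sum_le_sum fun e _ => card_endpts_le fst snd e
    _ = 2 * (E1 fst snd col M α).card := by rw [Finset.sum_const, smul_eq_mul, mul_comm]
  have hE1sub : E1 fst snd col M α ⊆ M := by
    rw [E1]; exact Finset.filter_subset _ _
  have hE1img : ((E1 fst snd col M α).image col).card = (E1 fst snd col M α).card := by
    apply Finset.card_image_of_injOn
    intro e he f hf h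
    exact hMcol e (hE1sub he) f (hE1sub hf) h
  rw [hE1img]
  have hcast : (((mVerts fst snd M).filter (fun v =>
      α * ((Fcols fst snd col M α).card : ℝ) ≤
        (goodDeg fst snd col M α v : ℝ))).card:ℝ) ≤ 2*((E1 fst snd col M α).card:ℝ) := by
    exact_mod_cast hHvcard
  linarith [hHvlb, hcast]
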